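/- Let A ⊆ Q be λ-measurable with 0 < λ(A) < ∞, with d(x) > 0 for λ-almost every x ∈ A, and set δ := inf_{x ∈ A} d(x) and d̄(A) := (1/λ(A)) ∫_A d(x) dλ(x); assume 0 < d̄(A) < ∞. Let h_A be the probability measure on A given by dh_A(x) = (d(x)/(d̄(A) λ(A))) dλ(x). Let S be an expanding search on Q such that x ↦ T(S,x) is λ-measurable, and suppose that for every t, if S(t) ∩ A ≠ ∅ then λ(S(t) \ A) ≥ δ (this holds on a network, where each S(t) is a connected set containing O). Then the expected normalized search time of S against the Hider strategy h_A satisfies ∫_A (T(S,x)/d(x)) dh_A(x) ≥ (δ + λ(A)/2)/d̄(A). -/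

import Mathlib

open MeasureTheory Metric

/-- The (expanding) search time of the point `H` under the search `S`: the infimum of the
admissible times `t` (i.e. `0 ≤ t < λ(Q)`) with `H ∈ S t`, equal to `∞` if there is none. -/
noncomputable def searchTime {Q : Type*} [MetricSpace Q] [MeasurableSpace Q]
    (μ : Measure Q) (S : ℝ → Set Q) (H : Q) : ENNReal :=
  ⨅ (t : ℝ) (_ : 0 ≤ t ∧ ENNReal.ofReal t < μ Set.univ ∧ H ∈ S t), ENNReal.ofReal t

/-- `S` is an expanding search on `Q` rooted at `O`: a family of measurable connected subsets
`S t` for `0 ≤ t < λ(Q)` with `S 0 = {O}`, nondecreasing in `t`, and `λ (S t) = t`. -/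
def IsExpandingSearch {Q : Type*} [MetricSpace Q] [MeasurableSpace Q]
    (μ : Measure Q) (O : Q) (S : ℝ → Set Q) : Prop :=
  S 0 = {O} ∧
  (∀ t : ℝ, 0 ≤ t → ENNReal.ofReal t < μ Set.univ →
    MeasurableSet (S t) ∧ IsConnected (S t) ∧ μ (S t) = ENNReal.ofReal t) ∧
  (∀ t t' : ℝ, 0 ≤ t → t ≤ t' → ENNReal.ofReal t' < μ Set.univ → S t ⊆ S t')

open scoped ENNReal NNReal in
private lemma aux_between {c : ENNReal} {t ε : ℝ} (ht : 0 ≤ t) (hε : 0 < ε)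
    (h : ENNReal.ofReal t < c) :
    ∃ t', t < t' ∧ t' ≤ t + ε ∧ ENNReal.ofReal t' < c := by
  rcases eq_or_ne c ⊤ with rfl | hc
  · exact ⟨t + ε, by linarith, le_rfl, ENNReal.ofReal_lt_top⟩
  · have htc : t < c.toReal := (ENNReal.ofReal_lt_iff_lt_toReal ht hc).mp h
    refine ⟨min (t + ε) ((t + c.toReal) / 2), ?_, min_le_left _ _, ?_⟩
    · rw [lt_min_iff]; constructor <;> linarith
    · calc ENNReal.ofReal (min (t + ε) ((t + c.toReal) / 2))
          ≤ ENNReal.ofReal ((t + c.toReal) / 2) :=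
            ENNReal.ofReal_le_ofReal (min_le_right _ _)
        _ < c := (ENNReal.ofReal_lt_iff_lt_toReal (by linarith) hc).mpr (by linarith)


/-- Theorem 4.2 of the paper. Let `A` be measurable with `0 < λ(A) < ∞`,
`d(x) > 0` for λ-a.e. `x ∈ A`, `δ = inf_{x ∈ A} d(x)` and `d̄(A) = (1/λ(A)) ∫_A d dλ` with
`0 < d̄(A) < ∞`. Let `h_A` be the probability measure on `A` with density
`d(x)/(d̄(A) λ(A))` with respect to `λ`. If `S` is an expanding search (with measurable
search-time function) such that whenever `S(t)` meets `A` one has `λ(S(t) \ A) ≥ δ`, then the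
expected normalized search time of `S` against `h_A` is at least `(δ + λ(A)/2)/d̄(A)`. -/
theorem distance_biased_hider_lower_bound
    {Q : Type*} [MetricSpace Q] [MeasurableSpace Q]
    (μ : Measure Q) (O : Q) (S : ℝ → Set Q) (hS : IsExpandingSearch μ O S)
    (hmeas : Measurable (searchTime μ S))
    (A : Set Q) (hA : MeasurableSet A) (hpos : 0 < μ A) (hfin : μ A < ⊤)
    (hd : ∀ᵐ x ∂(μ.restrict A), 0 < dist O x)
    (dbar : ENNReal) (hdbar : dbar = (∫⁻ x in A, ENNReal.ofReal (dist O x) ∂μ) / μ A)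
    (hdbar_pos : 0 < dbar) (hdbar_fin : dbar < ⊤)
    (hδ : ∀ t : ℝ, 0 ≤ t → ENNReal.ofReal t < μ Set.univ → (S t ∩ A).Nonempty →
      ENNReal.ofReal (sInf ((fun x => dist O x) '' A)) ≤ μ (S t \ A)) :
    (ENNReal.ofReal (sInf ((fun x => dist O x) '' A)) + μ A / 2) / dbar ≤
      ∫⁻ x in A, (searchTime μ S x / ENNReal.ofReal (dist O x)) *
        (ENNReal.ofReal (dist O x) / (dbar * μ A)) ∂μ := by
  obtain ⟨hS0, hSprop, hSmono⟩ := hS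
  set δ := ENNReal.ofReal (sInf ((fun x => dist O x) '' A)) with hδdef
  have ha0 : μ A ≠ 0 := hpos.ne'
  have haT : μ A ≠ ⊤ := hfin.ne
  have hdbar0 : dbar ≠ 0 := hdbar_pos.ne'
  have hdbarT : dbar ≠ ⊤ := hdbar_fin.ne
  set ν := μ.restrict A with hνdef
  haveI : IsFiniteMeasure ν := ⟨by rw [hνdef, Measure.restrict_apply_univ]; exact hfin⟩
  set T := searchTime μ S with hTdef
  -- key pointwise bound
  have key : ∀ x ∈ A, δ + ν {y | T y ≤ T x} ≤ T x := by
    intro x hx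
    have hTx' : ∀ t : ℝ, (0 ≤ t ∧ ENNReal.ofReal t < μ Set.univ ∧ x ∈ S t) →
        T x ≤ ENNReal.ofReal t := by
      intro t ht
      rw [hTdef]
      exact iInf₂_le t ht
    rw [hTdef]
    unfold searchTime
    refine le_iInf fun t => le_iInf fun ht => ?_
    obtain ⟨ht0, htlt, hxt⟩ := ht
    have hTx : T x ≤ ENNReal.ofReal t := hTx' t ⟨ht0, htlt, hxt⟩
    refine ENNReal.le_of_forall_pos_le_add fun ε hε _ => ?_
    obtain ⟨t', htt', ht'le, ht'lt⟩ := aux_between ht0 (show (0:ℝ) < ε from hε) htlt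
    have ht'0 : 0 ≤ t' := le_trans ht0 htt'.le
    have hxt' : x ∈ S t' := hSmono t t' ht0 htt'.le ht'lt hxt
    have htlt' : ENNReal.ofReal t < ENNReal.ofReal t' :=
      (ENNReal.ofReal_lt_ofReal_iff (lt_of_le_of_lt ht0 htt')).mpr htt'
    have hsub : A ∩ {y | T y < ENNReal.ofReal t'} ⊆ S t' := by
      rintro y ⟨hyA, hy⟩
      rw [hTdef] at hy
      simp only [searchTime, Set.mem_setOf_eq] at hy
      obtain ⟨s, hs⟩ := iInf_lt_iff.mp hy
      obtain ⟨⟨hs0, hslt, hys⟩, hsl⟩ := iInf_lt_iff.mp hs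
      have hst' : s < t' :=
        (ENNReal.ofReal_lt_ofReal_iff (lt_of_le_of_lt ht0 htt')).mp hsl
      exact hSmono s t' hs0 hst'.le ht'lt hys
    have hmset : MeasurableSet {y | T y ≤ T x} := hmeas measurableSet_Iic
    have hne : (S t' ∩ A).Nonempty :=
      ⟨x, hsub ⟨hx, lt_of_le_of_lt hTx htlt'⟩, hx⟩
    have h1 : ν {y | T y ≤ T x} ≤ μ (S t' ∩ A) := by
      rw [hνdef, Measure.restrict_apply hmset]
      refine measure_mono ?_
      rintro y ⟨(hy : T y ≤ T x), hyA⟩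
      exact ⟨hsub ⟨hyA, lt_of_le_of_lt (hy.trans hTx) htlt'⟩, hyA⟩
    calc δ + ν {y | T y ≤ T x}
        ≤ μ (S t' \ A) + μ (S t' ∩ A) := add_le_add (hδ t' ht'0 ht'lt hne) h1
      _ = μ (S t') := by rw [add_comm]; exact measure_inter_add_diff _ hA
      _ = ENNReal.ofReal t' := (hSprop t' ht'0 ht'lt).2.2
      _ ≤ ENNReal.ofReal t + ε := by
          calc ENNReal.ofReal t' ≤ ENNReal.ofReal (t + ε) :=
                ENNReal.ofReal_le_ofReal ht'le
            _ = ENNReal.ofReal t + ENNReal.ofReal (ε : ℝ) :=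
                ENNReal.ofReal_add ht0 ε.coe_nonneg
            _ = ENNReal.ofReal t + ε := by rw [ENNReal.ofReal_coe_nnreal]
  -- measurability of F and G
  have hFmeas : Measurable fun x => ν {y | T y ≤ T x} := by
    have hφ : Monotone fun c : ENNReal => ν {y | T y ≤ c} :=
      fun c c' hcc => measure_mono fun y hy => le_trans hy hcc
    exact hφ.measurable.comp hmeas
  -- Tonelli symmetry
  have hset : MeasurableSet {p : Q × Q | T p.2 ≤ T p.1} :=
    measurableSet_le (hmeas.comp measurable_snd) (hmeas.comp measurable_fst)
  have swap : ∫⁻ x, ν {y | T y ≤ T x} ∂ν = ∫⁻ y, ν {x | T y ≤ T x} ∂ν := by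
    have h1 : ∀ x : Q, ν {y | T y ≤ T x}
        = ∫⁻ y, {p : Q × Q | T p.2 ≤ T p.1}.indicator 1 (x, y) ∂ν := by
      intro x
      have : (fun y => ({p : Q × Q | T p.2 ≤ T p.1}.indicator 1 (x, y) : ENNReal))
          = {y | T y ≤ T x}.indicator 1 := by
        funext y; simp [Set.indicator_apply]
      rw [this]; exact (lintegral_indicator_one (hmeas measurableSet_Iic)).symm
    have h2 : ∀ y : Q, ν {x | T y ≤ T x}
        = ∫⁻ x, {p : Q × Q | T p.2 ≤ T p.1}.indicator 1 (x, y) ∂ν := by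
      intro y
      have : (fun x => ({p : Q × Q | T p.2 ≤ T p.1}.indicator 1 (x, y) : ENNReal))
          = {x | T y ≤ T x}.indicator 1 := by
        funext x; simp [Set.indicator_apply]
      rw [this]; exact (lintegral_indicator_one (hmeas measurableSet_Ici)).symm
    simp_rw [h1, h2]
    exact lintegral_lintegral_swap (measurable_const.indicator hset).aemeasurable
  -- lower bound for ∫ F
  have hFhalf : μ A * μ A / 2 ≤ ∫⁻ x, ν {y | T y ≤ T x} ∂ν := by
    rw [ENNReal.div_le_iff (two_ne_zero) (ENNReal.ofNat_ne_top)]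
    calc μ A * μ A = ∫⁻ _, μ A ∂ν := by
          rw [lintegral_const, hνdef, Measure.restrict_apply_univ]
      _ ≤ ∫⁻ x, (ν {y | T y ≤ T x} + ν {y | T x ≤ T y}) ∂ν := by
          refine lintegral_mono fun x => ?_
          calc μ A = ν Set.univ := by rw [hνdef, Measure.restrict_apply_univ]
            _ ≤ ν ({y | T y ≤ T x} ∪ {y | T x ≤ T y}) :=
                measure_mono fun y _ => le_total (T y) (T x)
            _ ≤ _ := measure_union_le _ _
      _ = (∫⁻ x, ν {y | T y ≤ T x} ∂ν) + ∫⁻ x, ν {y | T x ≤ T y} ∂ν :=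
          lintegral_add_left hFmeas _
      _ = (∫⁻ x, ν {y | T y ≤ T x} ∂ν) + ∫⁻ x, ν {y | T y ≤ T x} ∂ν := by rw [← swap]
      _ = (∫⁻ x, ν {y | T y ≤ T x} ∂ν) * 2 := by ring
  -- main integral bound
  have hmain : δ * μ A + μ A * μ A / 2 ≤ ∫⁻ x, T x ∂ν := by
    calc δ * μ A + μ A * μ A / 2
        ≤ δ * μ A + ∫⁻ x, ν {y | T y ≤ T x} ∂ν := add_le_add_right hFhalf _
      _ = ∫⁻ x, (δ + ν {y | T y ≤ T x}) ∂ν := by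
          rw [lintegral_add_left measurable_const, lintegral_const, hνdef,
            Measure.restrict_apply_univ]
      _ ≤ ∫⁻ x, T x ∂ν := by
          refine lintegral_mono_ae ?_
          filter_upwards [ae_restrict_mem hA] with x hx
          exact key x hx
  -- integrand simplification
  have hae : ∀ᵐ x ∂ν, (T x / ENNReal.ofReal (dist O x)) *
      (ENNReal.ofReal (dist O x) / (dbar * μ A)) = T x * (dbar * μ A)⁻¹ := by
    filter_upwards [hd] with x hx
    have h0 : ENNReal.ofReal (dist O x) ≠ 0 := (ENNReal.ofReal_pos.mpr hx).ne'
    have hT : ENNReal.ofReal (dist O x) ≠ ⊤ := ENNReal.ofReal_ne_top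
    calc (T x / ENNReal.ofReal (dist O x)) *
          (ENNReal.ofReal (dist O x) / (dbar * μ A))
        = T x * (dbar * μ A)⁻¹ *
          ((ENNReal.ofReal (dist O x))⁻¹ * ENNReal.ofReal (dist O x)) := by
          rw [div_eq_mul_inv, div_eq_mul_inv]; ring
      _ = T x * (dbar * μ A)⁻¹ := by
          rw [ENNReal.inv_mul_cancel h0 hT, mul_one]
  calc (δ + μ A / 2) / dbar
      = (δ * μ A + μ A * μ A / 2) * (dbar * μ A)⁻¹ := by
        rw [show δ * μ A + μ A * μ A / 2 = (δ + μ A / 2) * μ A by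
          rw [add_mul, div_eq_mul_inv, div_eq_mul_inv]; ring,
          ← div_eq_mul_inv, ENNReal.mul_div_mul_right _ _ ha0 haT]
    _ ≤ (∫⁻ x, T x ∂ν) * (dbar * μ A)⁻¹ := mul_le_mul_left hmain _
    _ = ∫⁻ x, T x * (dbar * μ A)⁻¹ ∂ν := (lintegral_mul_const _ hmeas).symm
    _ = ∫⁻ x, (T x / ENNReal.ofReal (dist O x)) *
          (ENNReal.ofReal (dist O x) / (dbar * μ A)) ∂ν :=
        (lintegral_congr_ae hae).symm
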